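/- Let f(x) = (1/n)∑_{i=1}^n f_i(x) with each f_i convex and L-smooth. Fix x̃, x, and draw a mini-batch I of size b uniformly at random (without replacement) from {1,…,n}. Define g = (1/b)∑_{i∈I}(∇f_i(x) − ∇f_i(x̃)) + ∇f(x̃). Then E[‖g − ∇f(x)‖²] ≤ 2L·δ(b)·( f(x̃) − f(x) + ⟨∇f(x), x − x̃⟩ ), where δ(b) = (n−b)/(b(n−1)). -/

import Mathlib

set_option linter.unusedSectionVars false
set_option linter.unnecessarySeqFocus false
set_option linter.unusedTactic false
set_option maxHeartbeats 1000000

open RealInnerProductSpace Finset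

section AuxAnalysis
variable {E : Type*} [NormedAddCommGroup E] [InnerProductSpace ℝ E] [CompleteSpace E]

lemma path_deriv (h : E → ℝ) (hd : Differentiable ℝ h) (z w : E) (t : ℝ) :
    HasDerivAt (fun s : ℝ => h (z + s • w)) ⟪gradient h (z + t • w), w⟫ t := by
  have hc : HasDerivAt (fun s : ℝ => z + s • w) w t := by
    simpa using ((hasDerivAt_id t).smul_const w).const_add z
  have hg := (hd (z + t • w)).hasGradientAt.hasFDerivAt
  have := hg.comp_hasDerivAt t hc
  simpa [InnerProductSpace.toDual_apply_apply, Function.comp_def] using this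

-- gradient inequality
lemma grad_ineq (h : E → ℝ) (hconv : ConvexOn ℝ Set.univ h) (hd : Differentiable ℝ h) (z y : E) :
    h z + ⟪gradient h z, y - z⟫ ≤ h y := by
  have hA : ConvexOn ℝ Set.univ (fun s : ℝ => h (z + s • (y - z))) := by
    have := hconv.comp_affineMap (AffineMap.lineMap z y : ℝ →ᵃ[ℝ] E)
    simpa [Function.comp_def, AffineMap.lineMap_apply, vsub_eq_sub, vadd_eq_add, add_comm] using this
  have hder : HasDerivAt (fun s : ℝ => h (z + s • (y - z))) ⟪gradient h z, y - z⟫ 0 := by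
    simpa using path_deriv h hd z (y - z) 0
  have := hA.le_slope_of_hasDerivAt (Set.mem_univ (0:ℝ)) (Set.mem_univ (1:ℝ)) one_pos hder
  rw [slope_def_field] at this
  simp at this
  have e : ⟪gradient h z, y - z⟫ = (fderiv ℝ h z) y - (fderiv ℝ h z) z := by
    rw [inner_sub_right]; simp [gradient]
  linarith

lemma descent (h : E → ℝ) (hd : Differentiable ℝ h) {L : ℝ} (hL : 0 < L)
    (hlip : ∀ a b : E, ‖gradient h a - gradient h b‖ ≤ L * ‖a - b‖) (z y : E) :
    h y ≤ h z + ⟪gradient h z, y - z⟫ + L / 2 * ‖y - z‖ ^ 2 := by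
  set w := y - z with hw
  set φ' : ℝ → ℝ := fun t => ⟪gradient h (z + t • w), w⟫ with hφ'
  have hgl : LipschitzWith (Real.toNNReal L) (gradient h) := by
    apply LipschitzWith.of_dist_le_mul
    intro a b
    rw [dist_eq_norm, dist_eq_norm, Real.coe_toNNReal L hL.le]
    exact hlip a b
  have hcont : Continuous φ' := by
    apply Continuous.inner
    · exact hgl.continuous.comp (by continuity)
    · exact continuous_const
  have hint : IntervalIntegrable φ' MeasureTheory.volume 0 1 :=
    hcont.intervalIntegrable 0 1
  have key : ∫ t in (0:ℝ)..1, φ' t = h y - h z := by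
    have := intervalIntegral.integral_eq_sub_of_hasDerivAt
      (f := fun s : ℝ => h (z + s • w)) (f' := φ')
      (fun t _ => path_deriv h hd z w t) hint
    simpa [hw] using this
  have hbound : ∀ t ∈ Set.Icc (0:ℝ) 1, φ' t ≤ ⟪gradient h z, w⟫ + (L * ‖w‖^2) * t := by
    intro t ht
    have h1 : φ' t - ⟪gradient h z, w⟫ = ⟪gradient h (z + t • w) - gradient h z, w⟫ := by
      rw [inner_sub_left]
    have h2 : ⟪gradient h (z + t • w) - gradient h z, w⟫ ≤ ‖gradient h (z + t • w) - gradient h z‖ * ‖w‖ :=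
      real_inner_le_norm _ _
    have h3 : ‖gradient h (z + t • w) - gradient h z‖ ≤ L * (t * ‖w‖) := by
      have := hlip (z + t • w) z
      simpa [norm_smul, abs_of_nonneg ht.1] using this
    nlinarith [norm_nonneg w, mul_le_mul_of_nonneg_right h3 (norm_nonneg w)]
  have hmono : ∫ t in (0:ℝ)..1, φ' t ≤ ∫ t in (0:ℝ)..1, (⟪gradient h z, w⟫ + (L * ‖w‖^2) * t) := by
    apply intervalIntegral.integral_mono_on zero_le_one hint
    · exact (Continuous.intervalIntegrable (by continuity) 0 1)
    · exact hbound
  have hval : ∫ t in (0:ℝ)..1, (⟪gradient h z, w⟫ + (L * ‖w‖^2) * t) = ⟪gradient h z, w⟫ + L / 2 * ‖w‖^2 := by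
    have h1 : IntervalIntegrable (fun _ : ℝ => ⟪gradient h z, w⟫) MeasureTheory.volume 0 1 := intervalIntegrable_const
    have h2 : IntervalIntegrable (fun t : ℝ => (L * ‖w‖^2) * t) MeasureTheory.volume 0 1 :=
      (continuous_const.mul continuous_id').intervalIntegrable 0 1
    rw [intervalIntegral.integral_add h1 h2, intervalIntegral.integral_const,
      intervalIntegral.integral_const_mul, integral_id]
    norm_num
    ring
  rw [key] at hmono
  rw [hval] at hmono
  linarith

lemma inner_right_hasGradient (c y : E) : HasGradientAt (fun v => ⟪c, v⟫) c y := by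
  rw [hasGradientAt_iff_hasFDerivAt]
  have hd : InnerProductSpace.toDual ℝ E c = innerSL ℝ c := by
    apply ContinuousLinearMap.ext; intro v
    simp [InnerProductSpace.toDual_apply_apply]
  rw [hd]
  exact (innerSL ℝ c).hasFDerivAt

lemma HasGradientAt.sub' {h₁ h₂ : E → ℝ} {g₁ g₂ : E} {y : E}
    (H1 : HasGradientAt h₁ g₁ y) (H2 : HasGradientAt h₂ g₂ y) :
    HasGradientAt (fun v => h₁ v - h₂ v) (g₁ - g₂) y := by
  rw [hasGradientAt_iff_hasFDerivAt] at *
  have := H1.sub H2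
  simpa [map_sub, Pi.sub_def] using this

lemma inner_concave (c : E) : ConcaveOn ℝ Set.univ (fun v => ⟪c, v⟫) := by
  refine ⟨convex_univ, ?_⟩
  intro a _ b _ s t _ _ _
  simp [inner_add_right, inner_smul_right]

lemma coco (h : E → ℝ) (hconv : ConvexOn ℝ Set.univ h) (hd : Differentiable ℝ h) {L : ℝ} (hL : 0 < L)
    (hlip : ∀ a b : E, ‖gradient h a - gradient h b‖ ≤ L * ‖a - b‖) (x xt : E) :
    ‖gradient h x - gradient h xt‖ ^ 2 ≤ 2 * L * (h xt - h x + ⟪gradient h x, x - xt⟫) := by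
  set c := gradient h x with hc
  set φ : E → ℝ := fun v => h v - ⟪c, v⟫ with hφ
  have hφg : ∀ v, HasGradientAt φ (gradient h v - c) v := fun v =>
    HasGradientAt.sub' (hd v).hasGradientAt (inner_right_hasGradient c v)
  have hφgrad : ∀ v, gradient φ v = gradient h v - c := fun v => (hφg v).gradient
  have hφd : Differentiable ℝ φ := fun v => ((hφg v).differentiableAt)
  have hφconv : ConvexOn ℝ Set.univ φ := hconv.sub (inner_concave c)
  have hφlip : ∀ a b : E, ‖gradient φ a - gradient φ b‖ ≤ L * ‖a - b‖ := by
    intro a b; rw [hφgrad, hφgrad]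
    simpa [sub_sub_sub_cancel_right] using hlip a b
  have hmin : ∀ v, φ x ≤ φ v := by
    intro v
    have := grad_ineq φ hφconv hφd x v
    rw [hφgrad x] at this
    simp [hc] at this
    simpa using this
  set u := gradient φ xt with hu
  set y0 := xt - L⁻¹ • u with hy0
  have hdesc := descent φ hφd hL hφlip xt y0
  have h1 : y0 - xt = -(L⁻¹ • u) := by rw [hy0]; abel
  have h2 : ⟪gradient φ xt, y0 - xt⟫ = -(L⁻¹ * ‖u‖^2) := by
    rw [h1, ← hu, inner_neg_right, real_inner_smul_right, real_inner_self_eq_norm_sq]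
  have h3 : ‖y0 - xt‖^2 = L⁻¹^2 * ‖u‖^2 := by
    rw [h1, norm_neg, norm_smul, Real.norm_eq_abs, abs_inv, abs_of_pos hL]
    ring
  have h4 : φ x ≤ φ xt - (1/(2*L)) * ‖u‖^2 := by
    have := (hmin y0).trans hdesc
    rw [h2, h3] at this
    have hL' : L ≠ 0 := hL.ne'
    calc φ x ≤ φ xt + -(L⁻¹ * ‖u‖^2) + L/2 * (L⁻¹^2 * ‖u‖^2) := this
    _ = φ xt - (1/(2*L)) * ‖u‖^2 := by field_simp; ring
  have h5 : ‖u‖^2 ≤ 2*L*(φ xt - φ x) := by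
    have h2L : (0:ℝ) < 2*L := by linarith
    have h9 : (1/(2*L)) * ‖u‖^2 ≤ φ xt - φ x := by linarith
    calc ‖u‖^2 = (2*L) * ((1/(2*L)) * ‖u‖^2) := by field_simp
    _ ≤ (2*L)*(φ xt - φ x) := mul_le_mul_of_nonneg_left h9 h2L.le
  have h6 : u = gradient h xt - c := hφgrad xt
  have h7 : ‖gradient h x - gradient h xt‖ = ‖u‖ := by rw [h6, hc, norm_sub_rev]
  rw [h7]
  have h8 : φ xt - φ x = h xt - h x + ⟪c, x - xt⟫ := by
    rw [hφ]; simp [inner_sub_right]; ring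
  rw [h8] at h5
  exact h5

end AuxAnalysis

section AuxComb
variable {E : Type*} [NormedAddCommGroup E] [InnerProductSpace ℝ E]

lemma count_supersets {α : Type*} [DecidableEq α] (s t : Finset α) (hts : t ⊆ s) {b : ℕ}
    (htb : t.card ≤ b) :
    ((Finset.powersetCard b s).filter (fun I => t ⊆ I)).card
      = (s.card - t.card).choose (b - t.card) := by
  rw [← Finset.card_sdiff_of_subset hts, ← Finset.card_powersetCard]
  apply Finset.card_bij' (fun I _ => I \ t) (fun J _ => J ∪ t)
  · intro I hI
    rw [Finset.mem_filter, Finset.mem_powersetCard] at hI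
    obtain ⟨⟨hIs, hIc⟩, htI⟩ := hI
    rw [Finset.mem_powersetCard]
    exact ⟨Finset.sdiff_subset_sdiff hIs (le_refl t), by rw [Finset.card_sdiff_of_subset htI, hIc]⟩
  · intro J hJ
    rw [Finset.mem_powersetCard] at hJ
    obtain ⟨hJs, hJc⟩ := hJ
    rw [Finset.subset_sdiff] at hJs
    rw [Finset.mem_filter, Finset.mem_powersetCard]
    refine ⟨⟨Finset.union_subset hJs.1 hts, ?_⟩, Finset.subset_union_right⟩
    rw [Finset.card_union_of_disjoint hJs.2, hJc, Nat.sub_add_cancel htb]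
  · intro I hI
    rw [Finset.mem_filter] at hI
    exact Finset.sdiff_union_of_subset hI.2
  · intro J hJ
    rw [Finset.mem_powersetCard, Finset.subset_sdiff] at hJ
    rw [Finset.union_sdiff_right]
    exact sdiff_eq_self_iff_disjoint.mpr hJ.1.2.symm

lemma T_eq {n b : ℕ} (hb1 : 1 ≤ b) (v : Fin n → E) (hv : ∑ i, v i = 0) :
    ∑ I ∈ powersetCard b (univ : Finset (Fin n)), ‖∑ i ∈ I, v i‖^2
      = ((((n-1).choose (b-1) : ℕ) : ℝ)
          - ((if b = 1 then 0 else (n-2).choose (b-2) : ℕ) : ℝ)) * ∑ i, ‖v i‖^2 := by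
  classical
  set P := powersetCard b (univ : Finset (Fin n)) with hP
  set A : ℕ := (n-1).choose (b-1) with hA
  set B : ℕ := if b = 1 then 0 else (n-2).choose (b-2) with hB
  have hN : ∀ i j : Fin n, (P.filter (fun I => i ∈ I ∧ j ∈ I)).card = if i = j then A else B := by
    intro i j
    by_cases hij : i = j
    · subst hij
      rw [if_pos rfl]
      have h1 : (P.filter (fun I => i ∈ I ∧ i ∈ I)) = (P.filter (fun I => ({i} : Finset (Fin n)) ⊆ I)) := by
        apply filter_congr; intro I _; simp
      rw [h1, hP]
      have := count_supersets (univ : Finset (Fin n)) {i} (subset_univ _) (b := b) (by simpa using hb1)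
      simpa using this
    · rw [if_neg hij]
      have hpair : (P.filter (fun I => i ∈ I ∧ j ∈ I))
          = (P.filter (fun I => ({i,j} : Finset (Fin n)) ⊆ I)) := by
        apply filter_congr; intro I _; simp [insert_subset_iff]
      rw [hpair]
      by_cases hb : b = 1
      · have hempty : (P.filter (fun I => ({i,j} : Finset (Fin n)) ⊆ I)) = ∅ := by
          rw [filter_eq_empty_iff]
          intro I hI hsub
          rw [hP, mem_powersetCard] at hI
          have h2 := card_le_card hsub
          rw [card_pair hij, hI.2, hb] at h2
          omega
        rw [hempty, hB, if_pos hb]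
        simp
      · have h2b : 2 ≤ b := by omega
        rw [hP]
        have := count_supersets (univ : Finset (Fin n)) {i,j} (subset_univ _) (b := b)
          (by rw [card_pair hij]; exact h2b)
        rw [this, card_univ, card_pair hij, Fintype.card_fin, hB, if_neg hb]
  have hswap : ∀ (F : Fin n → Fin n → ℝ) (I : Finset (Fin n)),
      (∑ i ∈ I, ∑ j ∈ I, F i j) = ∑ i, ∑ j, if i ∈ I ∧ j ∈ I then F i j else 0 := by
    intro F I
    rw [eq_comm]
    calc ∑ i, ∑ j, (if i ∈ I ∧ j ∈ I then F i j else 0)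
        = ∑ i, (if i ∈ I then ∑ j, (if j ∈ I then F i j else 0) else 0) := by
          apply sum_congr rfl; intro i _
          by_cases hi : i ∈ I <;> simp [hi]
      _ = ∑ i ∈ I, ∑ j, (if j ∈ I then F i j else 0) := by
          rw [sum_ite_mem, univ_inter]
      _ = ∑ i ∈ I, ∑ j ∈ I, F i j := by
          apply sum_congr rfl; intro i _; rw [sum_ite_mem, univ_inter]
  calc ∑ I ∈ P, ‖∑ i ∈ I, v i‖^2
      = ∑ I ∈ P, ∑ i, ∑ j, (if i ∈ I ∧ j ∈ I then ⟪v i, v j⟫ else 0) := by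
        apply sum_congr rfl; intro I _
        rw [← hswap]
        rw [← real_inner_self_eq_norm_sq, sum_inner]
        exact sum_congr rfl (fun i _ => inner_sum _ _ _)
    _ = ∑ i, ∑ j, ∑ I ∈ P, (if i ∈ I ∧ j ∈ I then ⟪v i, v j⟫ else 0) := by
        rw [Finset.sum_comm]
        exact sum_congr rfl (fun i _ => Finset.sum_comm)
    _ = ∑ i, ∑ j, ((if i = j then (A:ℝ) else (B:ℝ)) * ⟪v i, v j⟫) := by
        apply sum_congr rfl; intro i _
        apply sum_congr rfl; intro j _
        rw [← sum_filter, sum_const, nsmul_eq_mul, hN i j]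
        by_cases hij : i = j <;> simp [hij]
    _ = ∑ i, ∑ j, ((B:ℝ) * ⟪v i, v j⟫ + (if i = j then ((A:ℝ) - B) * ⟪v i, v j⟫ else 0)) := by
        apply sum_congr rfl; intro i _
        apply sum_congr rfl; intro j _
        by_cases hij : i = j <;> simp [hij] <;> ring
    _ = (B:ℝ) * ∑ i, ∑ j, ⟪v i, v j⟫ + ∑ i, ((A:ℝ) - B) * ⟪v i, v i⟫ := by
        simp only [Finset.sum_add_distrib, Finset.sum_ite_eq, Finset.mem_univ, if_true,
          ← Finset.mul_sum]
    _ = ((A:ℝ) - (B:ℝ)) * ∑ i, ‖v i‖^2 := by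
        have h0 : (∑ i, ∑ j, (inner ℝ (v i) (v j) : ℝ)) = 0 := by
          have h1 : (∑ i, ∑ j, (inner ℝ (v i) (v j) : ℝ)) = inner ℝ (∑ i, v i) (∑ j, v j) := by
            rw [sum_inner]
            exact sum_congr rfl fun i _ => (inner_sum _ _ _).symm
          rw [h1, hv, inner_zero_left]
        rw [h0, mul_zero, zero_add, mul_sum]
        exact sum_congr rfl (fun i _ => by rw [real_inner_self_eq_norm_sq])

end AuxComb

theorem minibatch_aux_number_identity {n b : ℕ} (hn : 2 ≤ n) (hb1 : 1 ≤ b) (hbn : b ≤ n) :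
    (1/(n.choose b : ℝ)) * ((1/(b:ℝ))^2 * (((n-1).choose (b-1) : ℝ)
      - ((if b = 1 then 0 else (n-2).choose (b-2) : ℕ) : ℝ)))
      = ((n:ℝ) - b)/((b:ℝ) * n * ((n:ℝ)-1)) := by
  have hn0 : (n:ℝ) ≠ 0 := by positivity
  have hn1 : (n:ℝ) - 1 ≠ 0 := by
    have : (2:ℝ) ≤ n := by exact_mod_cast hn
    linarith
  have hb0 : (b:ℝ) ≠ 0 := by positivity
  have hC0 : (n.choose b : ℝ) ≠ 0 := by
    exact_mod_cast (Nat.choose_pos hbn).ne'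
  by_cases hb : b = 1
  · subst hb
    simp only [if_pos rfl, Nat.choose_zero_right, Nat.choose_one_right]
    push_cast
    field_simp
    simp
  · have h2b : 2 ≤ b := by omega
    rw [if_neg hb]
    have e1 : n - 1 + 1 = n := by omega
    have e2 : b - 1 + 1 = b := by omega
    have e3 : n - 2 + 1 = n - 1 := by omega
    have e4 : b - 2 + 1 = b - 1 := by omega
    have hnat1 : n * (n-1).choose (b-1) = n.choose b * b := by
      have := Nat.add_one_mul_choose_eq (n-1) (b-1)
      simpa [Nat.succ_eq_add_one, e1, e2] using this
    have hnat2 : (n-1) * (n-2).choose (b-2) = (n-1).choose (b-1) * (b-1) := by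
      have := Nat.add_one_mul_choose_eq (n-2) (b-2)
      simpa [Nat.succ_eq_add_one, e3, e4] using this
    have r1 : (n:ℝ) * ((n-1).choose (b-1) : ℝ) = (n.choose b : ℝ) * b := by
      exact_mod_cast hnat1
    have r2 : ((n:ℝ)-1) * ((n-2).choose (b-2) : ℝ)
        = ((n-1).choose (b-1) : ℝ) * ((b:ℝ)-1) := by
      have : ((n-1 : ℕ) : ℝ) * ((n-2).choose (b-2) : ℝ)
          = ((n-1).choose (b-1) : ℝ) * ((b-1 : ℕ) : ℝ) := by exact_mod_cast hnat2
      rwa [Nat.cast_sub (by omega : 1 ≤ n), Nat.cast_sub hb1, Nat.cast_one] at this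
    have hA0 : ((n-1).choose (b-1) : ℝ) ≠ 0 := by
      exact_mod_cast (Nat.choose_pos (by omega : b - 1 ≤ n - 1)).ne'
    have hc : (n.choose b : ℝ) = (n:ℝ) * ((n-1).choose (b-1) : ℝ) / b := by
      field_simp; linarith [r1]
    have hB : ((n-2).choose (b-2) : ℝ)
        = ((n-1).choose (b-1) : ℝ) * ((b:ℝ)-1) / ((n:ℝ)-1) := by
      field_simp; linarith [r2]
    rw [hc, hB]
    field_simp
    ring


theorem minibatch_svrg_variance_bound {d n b : ℕ} (hn : 2 ≤ n) (hb1 : 1 ≤ b) (hbn : b ≤ n)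
    (fi : Fin n → EuclideanSpace ℝ (Fin d) → ℝ) (L : ℝ) (hL : 0 < L)
    (hconv : ∀ i, ConvexOn ℝ Set.univ (fi i))
    (hdiff : ∀ i, Differentiable ℝ (fi i))
    (hlip : ∀ i x y, ‖gradient (fi i) x - gradient (fi i) y‖ ≤ L * ‖x - y‖)
    (f : EuclideanSpace ℝ (Fin d) → ℝ)
    (hf : f = fun x => (1 / (n : ℝ)) * ∑ i, fi i x)
    (xt x : EuclideanSpace ℝ (Fin d))
    (g : Finset (Fin n) → EuclideanSpace ℝ (Fin d))
    (hg : ∀ I, g I = (1 / (b : ℝ)) •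
        (∑ i ∈ I, (gradient (fi i) x - gradient (fi i) xt)) + gradient f xt) :
    (1 / (n.choose b : ℝ)) *
        ∑ I ∈ Finset.powersetCard b (Finset.univ : Finset (Fin n)),
          ‖g I - gradient f x‖ ^ 2 ≤
      2 * L * ((n - b : ℝ) / (b * (n - 1))) *
        (f xt - f x + ⟪gradient f x, x - xt⟫) := by
  classical
  have hn0 : (n:ℝ) ≠ 0 := by positivity
  have hb0 : (b:ℝ) ≠ 0 := by positivity
  have hn1 : (n:ℝ) - 1 ≠ 0 := by
    have : (2:ℝ) ≤ n := by exact_mod_cast hn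
    linarith
  -- gradient of f
  have hgradf : ∀ y, gradient f y = (1/(n:ℝ)) • ∑ i, gradient (fi i) y := by
    intro y
    have hsum : HasFDerivAt (fun z => ∑ i, fi i z)
        (∑ i, InnerProductSpace.toDual ℝ (EuclideanSpace ℝ (Fin d)) (gradient (fi i) y)) y :=
      HasFDerivAt.fun_sum (fun i _ => ((hdiff i) y).hasGradientAt.hasFDerivAt)
    have h2 : HasFDerivAt f
        ((1/(n:ℝ)) • ∑ i, InnerProductSpace.toDual ℝ (EuclideanSpace ℝ (Fin d)) (gradient (fi i) y)) y := by
      rw [hf]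
      exact hsum.const_mul (1/(n:ℝ))
    have h3 : HasGradientAt f
        ((InnerProductSpace.toDual ℝ (EuclideanSpace ℝ (Fin d))).symm
          ((1/(n:ℝ)) • ∑ i, InnerProductSpace.toDual ℝ (EuclideanSpace ℝ (Fin d)) (gradient (fi i) y))) y :=
      h2.hasGradientAt
    rw [h3.gradient, map_smul, map_sum]
    simp [LinearIsometryEquiv.symm_apply_apply]
    rfl
  set a : Fin n → (EuclideanSpace ℝ (Fin d)) := fun i => gradient (fi i) x - gradient (fi i) xt with ha
  set m : (EuclideanSpace ℝ (Fin d)) := gradient f x - gradient f xt with hmdef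
  have hm : m = (1/(n:ℝ)) • ∑ i, a i := by
    rw [hmdef, hgradf, hgradf, ← smul_sub, ← Finset.sum_sub_distrib]
  have hsum_a : ∑ i, a i = (n:ℝ) • m := by
    rw [hm, smul_smul, mul_one_div, div_self hn0, one_smul]
  set v : Fin n → (EuclideanSpace ℝ (Fin d)) := fun i => a i - m with hv
  have hv0 : ∑ i, v i = 0 := by
    rw [hv]
    rw [Finset.sum_sub_distrib, hsum_a, Finset.sum_const, card_univ, Fintype.card_fin]
    rw [← Nat.cast_smul_eq_nsmul ℝ]
    simp
  set P := Finset.powersetCard b (Finset.univ : Finset (Fin n)) with hP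
  -- rewrite each summand
  have step1 : ∀ I ∈ P, g I - gradient f x = (1/(b:ℝ)) • ∑ i ∈ I, v i := by
    intro I hI
    have hIb : I.card = b := (Finset.mem_powersetCard.mp hI).2
    have h1 : ∑ i ∈ I, v i = (∑ i ∈ I, a i) - (b:ℝ) • m := by
      rw [hv, Finset.sum_sub_distrib, Finset.sum_const, hIb, ← Nat.cast_smul_eq_nsmul ℝ]
    rw [hg I, h1, smul_sub, smul_smul, one_div, inv_mul_cancel₀ hb0, one_smul, ha, hmdef]
    abel
  have step2 : (1 / (n.choose b : ℝ)) * ∑ I ∈ P, ‖g I - gradient f x‖ ^ 2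
      = (1 / (n.choose b : ℝ)) * ((1/(b:ℝ))^2 * ∑ I ∈ P, ‖∑ i ∈ I, v i‖^2) := by
    congr 1
    rw [Finset.mul_sum]
    apply Finset.sum_congr rfl
    intro I hI
    rw [step1 I hI, norm_smul, Real.norm_eq_abs, mul_pow, sq_abs]
  set S : ℝ := ∑ i, ‖v i‖^2 with hS
  set ρ : ℝ := ((n:ℝ) - b)/((b:ℝ) * n * ((n:ℝ)-1)) with hρ
  have hρ0 : 0 ≤ ρ := by
    have h1 : (b:ℝ) ≤ n := by exact_mod_cast hbn
    have h2 : (2:ℝ) ≤ n := by exact_mod_cast hn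
    have h3 : (0:ℝ) < b := by positivity
    have hn2 : (0:ℝ) < (n:ℝ) := by linarith
    have hm1 : (0:ℝ) < (n:ℝ) - 1 := by linarith
    have hd : (0:ℝ) ≤ (b:ℝ) * n * ((n:ℝ)-1) := (mul_pos (mul_pos h3 hn2) hm1).le
    exact div_nonneg (by linarith) hd
  have hLHS : (1 / (n.choose b : ℝ)) * ∑ I ∈ P, ‖g I - gradient f x‖ ^ 2 = ρ * S := by
    rw [step2, hP, T_eq hb1 v hv0, ← hS]
    rw [show (1 / (n.choose b : ℝ)) * ((1/(b:ℝ))^2 * (((((n-1).choose (b-1) : ℕ) : ℝ)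
          - ((if b = 1 then 0 else (n-2).choose (b-2) : ℕ) : ℝ)) * S))
        = ((1/(n.choose b : ℝ)) * ((1/(b:ℝ))^2 * ((((n-1).choose (b-1) : ℕ) : ℝ)
          - ((if b = 1 then 0 else (n-2).choose (b-2) : ℕ) : ℝ)))) * S by ring]
    rw [minibatch_aux_number_identity hn hb1 hbn, hρ]
  -- variance reduction: S ≤ ∑ ‖a i‖²
  have hSle : S ≤ ∑ i, ‖a i‖^2 := by
    have hexpand : S = (∑ i, ‖a i‖^2) - (n:ℝ) * ‖m‖^2 := by
      rw [hS]
      have : ∀ i, ‖v i‖^2 = ‖a i‖^2 - 2 * ⟪a i, m⟫ + ‖m‖^2 := by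
        intro i
        rw [hv]
        exact norm_sub_sq_real (a i) m
      rw [Finset.sum_congr rfl (fun i _ => this i)]
      rw [Finset.sum_add_distrib, Finset.sum_sub_distrib, ← Finset.mul_sum, ← sum_inner, hsum_a,
        real_inner_smul_left, real_inner_self_eq_norm_sq, Finset.sum_const, card_univ,
        Fintype.card_fin, nsmul_eq_mul]
      ring
    rw [hexpand]
    have : 0 ≤ (n:ℝ) * ‖m‖^2 := by positivity
    linarith
  -- cocoercivity
  set c : Fin n → ℝ := fun i => fi i xt - fi i x + ⟪gradient (fi i) x, x - xt⟫ with hc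
  have hcoco : ∑ i, ‖a i‖^2 ≤ 2 * L * ∑ i, c i := by
    rw [Finset.mul_sum]
    apply Finset.sum_le_sum
    intro i _
    exact coco (fi i) (hconv i) (hdiff i) hL (hlip i) x xt
  -- RHS rewriting
  have hRHS : f xt - f x + ⟪gradient f x, x - xt⟫ = (1/(n:ℝ)) * ∑ i, c i := by
    rw [hgradf, real_inner_smul_left, sum_inner]
    simp only [hf, hc, Finset.sum_add_distrib, Finset.sum_sub_distrib]
    ring
  calc (1 / (n.choose b : ℝ)) * ∑ I ∈ P, ‖g I - gradient f x‖ ^ 2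
      = ρ * S := hLHS
    _ ≤ ρ * (2 * L * ∑ i, c i) := by
        apply mul_le_mul_of_nonneg_left _ hρ0
        calc S ≤ ∑ i, ‖a i‖^2 := hSle
          _ ≤ 2 * L * ∑ i, c i := hcoco
    _ = 2 * L * ((n - b : ℝ) / (b * (n - 1))) * (f xt - f x + ⟪gradient f x, x - xt⟫) := by
        rw [hRHS, hρ]
        push_cast
        field_simp
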